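/- For probability vectors p, q ∈ ℝⁿ with positive entries, if |pᵢ - qᵢ| ≤ ε for all i with ε ≤ 1/(2e) and n·ε ≤ 1/2, then |H(p) - H(q)| ≤ n·ε·(log n - log(n·ε)) + n·ε, where H denotes Shannon entropy. (A continuity estimate for entropy in the style of the persistent entropy stability theorem.) -/
import Mathlib


open BigOperators

/-- `t * log t` is antitone on `(0, e⁻¹]`. -/
lemma mulLog_anti {a b : ℝ} (ha : 0 < a) (hab : a ≤ b) (hb : b ≤ Real.exp (-1)) :
    b * Real.log b ≤ a * Real.log a := by
  rcases eq_or_lt_of_le hab with rfl | hlt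
  · exact le_rfl
  · obtain ⟨c, hc, hc'⟩ := exists_hasDerivAt_eq_slope (fun t => t * Real.log t)
      (fun x => Real.log x + 1) hlt
      (Real.continuous_mul_log.continuousOn)
      (fun x hx => Real.hasDerivAt_mul_log (by linarith [hx.1]))
    have hc0 : 0 < c := lt_trans ha hc.1
    have hlog : Real.log c + 1 ≤ 0 := by
      have : Real.log c ≤ Real.log (Real.exp (-1)) :=
        Real.log_le_log hc0 (le_of_lt (lt_of_lt_of_le hc.2 hb))
      rw [Real.log_exp] at this; linarith
    have hba : 0 < b - a := by linarith
    have := hc'.symm.le.trans hlog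
    nlinarith [div_le_iff₀ hba |>.mp this]

/-- Key single-coordinate estimate. -/
lemma key_est {x y ε : ℝ} (hx : 0 < x) (hxy : x ≤ y) (hy1 : y ≤ 1)
    (hd : y - x ≤ ε) (hε : 0 < ε) (hεe : ε ≤ 1 / (2 * Real.exp 1)) :
    |y * Real.log y - x * Real.log x| ≤ -ε * Real.log ε + ε := by
  have hy : 0 < y := lt_of_lt_of_le hx hxy
  have hεe' : ε ≤ Real.exp (-1) := by
    have h2 : 0 < Real.exp 1 := Real.exp_pos 1
    rw [Real.exp_neg, inv_eq_one_div]
    exact hεe.trans (one_div_le_one_div_of_le h2 (by linarith))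
  have hε1 : ε < 1 := lt_of_le_of_lt hεe' (by
      have := Real.exp_lt_one_iff.mpr (by norm_num : (-1:ℝ) < 0); linarith)
  have hlogε : Real.log ε < 0 := Real.log_neg hε hε1
  have hlogy : Real.log y ≤ 0 := Real.log_nonpos (le_of_lt hy) hy1
  -- decomposition
  have hdecomp : y * Real.log y - x * Real.log x
      = (y - x) * Real.log y + x * (Real.log y - Real.log x) := by ring
  -- second term bounds
  have hB0 : 0 ≤ x * (Real.log y - Real.log x) := by
    have := Real.log_le_log hx hxy
    nlinarith
  have hBε : x * (Real.log y - Real.log x) ≤ ε := by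
    have h1 : Real.log y - Real.log x = Real.log (y / x) := (Real.log_div hy.ne' hx.ne').symm
    have h2 : Real.log (y / x) ≤ y / x - 1 := Real.log_le_sub_one_of_pos (by positivity)
    have h3 : x * (y / x - 1) = y - x := by field_simp
    calc x * (Real.log y - Real.log x) = x * Real.log (y / x) := by rw [h1]
      _ ≤ x * (y / x - 1) := by nlinarith
      _ = y - x := h3
      _ ≤ ε := hd
  -- first term bounds
  have hA0 : (y - x) * Real.log y ≤ 0 := mul_nonpos_of_nonneg_of_nonpos (by linarith) hlogy
  have hAlow : ε * Real.log ε ≤ (y - x) * Real.log y := by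
    rcases le_or_gt ε y with hcase | hcase
    · -- y ≥ ε : log y ≥ log ε
      have h1 : Real.log ε ≤ Real.log y := Real.log_le_log hε hcase
      nlinarith
    · -- y < ε : (y-x) log y ≥ y log y ≥ ε log ε
      have h1 : ε * Real.log ε ≤ y * Real.log y :=
        mulLog_anti hy (le_of_lt hcase) hεe'
      nlinarith
  rw [hdecomp, abs_le]
  constructor <;> nlinarith

/-- A continuity estimate for Shannon entropy: if two positive probability
vectors are `ε`-close entrywise with `ε ≤ 1/(2e)` and `n ε ≤ 1/2`, then their
entropies differ by at most `n ε (log n - log (n ε)) + n ε`. -/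
theorem entropy_continuity (n : ℕ) (p q : Fin n → ℝ) (ε : ℝ) (hε : 0 < ε)
    (hp : ∀ i, 0 < p i) (hq : ∀ i, 0 < q i)
    (hps : ∑ i, p i = 1) (hqs : ∑ i, q i = 1)
    (hclose : ∀ i, |p i - q i| ≤ ε)
    (hε1 : ε ≤ 1 / (2 * Real.exp 1)) (hε2 : (n : ℝ) * ε ≤ 1 / 2) :
    |(-(∑ i, p i * Real.log (p i))) - (-(∑ i, q i * Real.log (q i)))| ≤
      (n : ℝ) * ε * (Real.log n - Real.log ((n : ℝ) * ε)) + (n : ℝ) * ε := by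
  have hn : 0 < n := by
    by_contra h
    push_neg at h
    interval_cases n
    simp at hps
  have hn' : (0:ℝ) < n := by exact_mod_cast hn
  -- each coordinate is at most 1
  have hple : ∀ i, p i ≤ 1 := by
    intro i
    rw [← hps]
    exact Finset.single_le_sum (fun j _ => (hp j).le) (Finset.mem_univ i)
  have hqle : ∀ i, q i ≤ 1 := by
    intro i
    rw [← hqs]
    exact Finset.single_le_sum (fun j _ => (hq j).le) (Finset.mem_univ i)
  -- per-coordinate estimate
  have hterm : ∀ i, |q i * Real.log (q i) - p i * Real.log (p i)|
      ≤ -ε * Real.log ε + ε := by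
    intro i
    rcases le_total (p i) (q i) with hc | hc
    · exact key_est (hp i) hc (hqle i) (by have := hclose i; rw [abs_le] at this; linarith)
        hε hε1
    · rw [abs_sub_comm]
      exact key_est (hq i) hc (hple i) (by have := hclose i; rw [abs_le] at this; linarith)
        hε hε1
  have hsum : |(-(∑ i, p i * Real.log (p i))) - (-(∑ i, q i * Real.log (q i)))|
      ≤ (n:ℝ) * (-ε * Real.log ε + ε) := by
    have h1 : (-(∑ i, p i * Real.log (p i))) - (-(∑ i, q i * Real.log (q i)))
        = ∑ i, (q i * Real.log (q i) - p i * Real.log (p i)) := by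
      rw [Finset.sum_sub_distrib]; ring
    rw [h1]
    calc |∑ i, (q i * Real.log (q i) - p i * Real.log (p i))|
        ≤ ∑ i, |q i * Real.log (q i) - p i * Real.log (p i)| :=
          Finset.abs_sum_le_sum_abs _ _
      _ ≤ ∑ _i : Fin n, (-ε * Real.log ε + ε) :=
          Finset.sum_le_sum (fun i _ => hterm i)
      _ = (n:ℝ) * (-ε * Real.log ε + ε) := by
          rw [Finset.sum_const, Finset.card_univ, Fintype.card_fin, nsmul_eq_mul]
  have hrhs : (n : ℝ) * ε * (Real.log n - Real.log ((n : ℝ) * ε)) + (n : ℝ) * ε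
      = (n:ℝ) * (-ε * Real.log ε + ε) := by
    rw [Real.log_mul hn'.ne' hε.ne']
    ring
  rw [hrhs]
  exact hsum
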